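/- Let d = gcd(m, ℓ). If there are non-negative integers a_1,…,a_{m/d}, each at most d, with Σ a_i = n and Σ a_i z_i = 0 where z_1,…,z_{m/d} enumerate the (m/d)-th roots of unity, then there exist n pairwise distinct m-th roots of unity x_1,…,x_n with x_1^ℓ + ⋯ + x_n^ℓ = 0. -/

import Mathlib

open Polynomial Finset

lemma fiber_card_ge (m ℓ d : ℕ) (hm : 0 < m) (hℓ : 0 < ℓ) (hd : d = Nat.gcd m ℓ)
    (z : ℂ) (hz : z ^ (m / d) = 1) :
    d ≤ ((nthRootsFinset m (1 : ℂ)).filter (fun x => x ^ ℓ = z)).card := by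
  have hd0 : 0 < d := hd ▸ Nat.gcd_pos_of_pos_left ℓ hm
  have hdm : d ∣ m := hd ▸ Nat.gcd_dvd_left m ℓ
  have hdl : d ∣ ℓ := hd ▸ Nat.gcd_dvd_right m ℓ
  have hmd0 : 0 < m / d := Nat.div_pos (Nat.le_of_dvd hm hdm) hd0
  set ζ : ℂ := Complex.exp (2 * Real.pi * Complex.I / m) with hζdef
  have hζ : IsPrimitiveRoot ζ m := Complex.isPrimitiveRoot_exp m hm.ne'
  have hζd : IsPrimitiveRoot (ζ ^ d) (m / d) := hζ.pow hm (Nat.mul_div_cancel' hdm).symm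
  have hcop : (ℓ / d).Coprime (m / d) := by
    rw [hd]; exact (Nat.coprime_div_gcd_div_gcd (hd ▸ hd0)).symm
  have hζl : IsPrimitiveRoot (ζ ^ ℓ) (m / d) := by
    have := hζd.pow_of_coprime (ℓ / d) hcop
    rwa [← pow_mul, Nat.mul_div_cancel' hdl] at this
  haveI : NeZero (m / d) := ⟨hmd0.ne'⟩
  obtain ⟨k, -, hk⟩ := hζl.eq_pow_of_pow_eq_one hz
  have hζmd : IsPrimitiveRoot (ζ ^ (m / d)) d := hζ.pow hm (Nat.div_mul_cancel hdm).symm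
  have hne : ζ ^ (ℓ * k) ≠ 0 := pow_ne_zero _ (hζ.ne_zero hm.ne')
  -- map j ↦ ζ^(ℓ*k) * (ζ^(m/d))^j? no: need m-th roots. Use x_j = ζ^k * (ζ^(m/d))^j
  have key : ∀ j ∈ Finset.range d, ζ ^ k * (ζ ^ (m / d)) ^ j ∈
      (nthRootsFinset m (1 : ℂ)).filter (fun x => x ^ ℓ = z) := by
    intro j hj
    rw [Finset.mem_filter, Polynomial.mem_nthRootsFinset hm]
    have hone : ∀ e : ℕ, m ∣ e → ζ ^ e = 1 := fun e he => (hζ.pow_eq_one_iff_dvd e).mpr he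
    have hx : ζ ^ k * (ζ ^ (m / d)) ^ j = ζ ^ (k + m / d * j) := by rw [pow_add, pow_mul]
    have e1 : m / d * ℓ = m * (ℓ / d) := by
      obtain ⟨ℓ', rfl⟩ := hdl
      rw [Nat.mul_div_cancel_left _ hd0, ← mul_assoc, Nat.div_mul_cancel hdm]
    constructor
    · rw [hx, ← pow_mul]
      exact hone _ (dvd_mul_left m _)
    · rw [hx, ← pow_mul, Nat.add_mul, pow_add]
      have h2 : ζ ^ (m / d * j * ℓ) = 1 := by
        apply hone
        have : m / d * j * ℓ = m * (ℓ / d * j) := by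
          rw [mul_right_comm, e1, mul_assoc]
        rw [this]
        exact Dvd.intro _ rfl
      rw [h2, mul_one, mul_comm k ℓ, pow_mul]
      exact hk
  have hinj : Set.InjOn (fun j => ζ ^ k * (ζ ^ (m / d)) ^ j) (Finset.range d) := by
    intro i hi j hj e
    apply hζmd.injOn_pow (by simpa using hi) (by simpa using hj)
    have hne' : ζ ^ k ≠ 0 := pow_ne_zero _ (hζ.ne_zero hm.ne')
    simpa using mul_left_cancel₀ hne' e
  calc d = (Finset.range d).card := (Finset.card_range d).symm
    _ ≤ _ := Finset.card_le_card_of_injOn _ key hinj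

theorem height_converse (m ℓ n : ℕ) (hm : 0 < m) (hℓ : 0 < ℓ) (hn2 : 2 ≤ n)
    (hnm : n ≤ m) (d : ℕ) (hd : d = Nat.gcd m ℓ)
    (a : ℂ → ℕ) (ha : ∀ z, a z ≤ d)
    (hsum : (∑ z ∈ Polynomial.nthRootsFinset (m / d) (1 : ℂ), a z) = n)
    (hvanish : ∑ z ∈ Polynomial.nthRootsFinset (m / d) (1 : ℂ), (a z : ℂ) * z = 0) :
    ∃ x : Fin n → ℂ, Function.Injective x ∧ (∀ i, x i ^ m = 1) ∧
      ∑ i, (x i) ^ ℓ = 0 := by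
  classical
  have hd0 : 0 < d := hd ▸ Nat.gcd_pos_of_pos_left ℓ hm
  have hdm : d ∣ m := hd ▸ Nat.gcd_dvd_left m ℓ
  have hmd0 : 0 < m / d := Nat.div_pos (Nat.le_of_dvd hm hdm) hd0
  set S := Polynomial.nthRootsFinset (m / d) (1 : ℂ) with hS
  have hchoose : ∀ z ∈ S, ∃ t ⊆ (nthRootsFinset m (1 : ℂ)).filter (fun x => x ^ ℓ = z),
      t.card = a z := by
    intro z hz
    apply Finset.exists_subset_card_eq
    exact le_trans (ha z) (fiber_card_ge m ℓ d hm hℓ hd z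
      ((Polynomial.mem_nthRootsFinset hmd0 1).mp hz))
  choose! T hT1 hT2 using hchoose
  have hTsub : ∀ z ∈ S, ∀ x ∈ T z, x ^ m = 1 ∧ x ^ ℓ = z := by
    intro z hz x hx
    have := hT1 z hz hx
    rw [Finset.mem_filter, Polynomial.mem_nthRootsFinset hm] at this
    exact this
  have hdisj : ∀ z ∈ S, ∀ z' ∈ S, z ≠ z' → Disjoint (T z) (T z') := by
    intro z hz z' hz' hne
    rw [Finset.disjoint_left]
    intro x hx hx'
    exact hne ((hTsub z hz x hx).2 ▸ (hTsub z' hz' x hx').2 ▸ rfl)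
  set B := S.biUnion T with hB
  have hBcard : B.card = n := by
    rw [hB, Finset.card_biUnion hdisj]
    rw [← hsum]
    exact Finset.sum_congr rfl hT2
  have hBmem : ∀ x ∈ B, x ^ m = 1 := by
    intro x hx
    rw [hB, Finset.mem_biUnion] at hx
    obtain ⟨z, hz, hxz⟩ := hx
    exact (hTsub z hz x hxz).1
  have hBsum : ∑ x ∈ B, x ^ ℓ = 0 := by
    rw [hB, Finset.sum_biUnion hdisj]
    rw [← hvanish]
    apply Finset.sum_congr rfl
    intro z hz
    rw [Finset.sum_congr rfl (fun x hx => (hTsub z hz x hx).2), Finset.sum_const,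
      hT2 z hz, nsmul_eq_mul]
  let e : Fin n ≃ {x // x ∈ B} := (Fin.castOrderIso hBcard.symm).toEquiv.trans B.equivFin.symm
  refine ⟨fun i => (e i : ℂ), ?_, ?_, ?_⟩
  · intro i j hij
    exact e.injective (Subtype.ext hij)
  · intro i; exact hBmem _ (e i).2
  · rw [← hBsum, ← Finset.sum_coe_sort B (fun x => x ^ ℓ)]
    exact Fintype.sum_equiv e _ _ (fun i => rfl)
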